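/- Let G be a finite group, H ≤ G, V a kG-module, and M_{G/H} the k-span of {e_t − e_ι : t ∈ T} inside the permutation module k(G/H). Then the kernel of the relative transfer map Tr^G_H : k[V]^H → k[V]^G, f ↦ Σ_{t∈T} t·f, is isomorphic as a graded k[V]^G-module to the module of covariants (k[V] ⊗ M_{G/H})^G. -/
import Mathlib

section Aux
variable {G : Type*} [Group G] {H : Subgroup G} {R : Type*} [CommRing R] [MulSemiringAction G R]

lemma aux_smul_out (g : G) (c : G ⧸ H) (f : R) (hf : ∀ h ∈ H, h • f = f) :
    g • (Quotient.out (g⁻¹ • c)) • f = (Quotient.out c) • f := by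
  have h1 : (QuotientGroup.mk (g * Quotient.out (g⁻¹ • c)) : G ⧸ H) = QuotientGroup.mk (Quotient.out c) := by
    rw [QuotientGroup.out_eq']
    have : QuotientGroup.mk (g * Quotient.out (g⁻¹ • c)) = g • (QuotientGroup.mk (Quotient.out (g⁻¹ • c)) : G ⧸ H) := rfl
    rw [this, QuotientGroup.out_eq', smul_smul, mul_inv_cancel, one_smul]
  rw [QuotientGroup.eq] at h1
  have h2 := hf _ (inv_mem h1)
  have h3 : g * Quotient.out (g⁻¹ • c) = Quotient.out c * ((g * Quotient.out (g⁻¹ • c))⁻¹ * Quotient.out c)⁻¹ := by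
    group
  rw [← mul_smul, h3, mul_smul, h2]

lemma aux_inv (φ : G ⧸ H → R) (hφ : ∀ g : G, (fun c : G ⧸ H => g • φ (g⁻¹ • c)) = φ)
    (g : G) (c : G ⧸ H) : g • φ c = φ (g • c) := by
  have := congrFun (hφ g) (g • c)
  simpa [smul_smul] using this

lemma aux_smul_one (g : G) : g • (QuotientGroup.mk (1 : G) : G ⧸ H) = QuotientGroup.mk g := by
  show (QuotientGroup.mk (g * 1) : G ⧸ H) = QuotientGroup.mk g
  rw [mul_one]

end Aux

/-- The kernel of the relative transfer map
`Tr^G_H : k[V]^H → k[V]^G`, `f ↦ Σ_{t∈T} t•f`, is isomorphic as a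
`k[V]^G`-module to the module of covariants `(k[V] ⊗ M_{G/H})^G`, where
`M_{G/H} ⊆ k(G/H)` is the kernel of the augmentation.  Here
`k[V] ⊗ k(G/H)` is realised as `G ⧸ H → k[V]` with the diagonal action, and
`k[V] ⊗ M_{G/H}` as the subspace of functions whose values sum to zero. -/
theorem ker_transfer_iso_covariants
    {G : Type*} [Group G] (H : Subgroup G) [Fintype (G ⧸ H)]
    {R : Type*} [CommRing R] [MulSemiringAction G R] :
    ∃ e : {f : R // (∀ h ∈ H, h • f = f) ∧ (∑ c : G ⧸ H, (Quotient.out c) • f) = 0} ≃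
          {φ : G ⧸ H → R //
            (∀ g : G, (fun c : G ⧸ H => g • φ (g⁻¹ • c)) = φ) ∧ (∑ c : G ⧸ H, φ c) = 0},
      -- additivity
      (∀ f₁ f₂ : {f : R // (∀ h ∈ H, h • f = f) ∧ (∑ c : G ⧸ H, (Quotient.out c) • f) = 0},
          ∀ hsum : ((f₁ : R) + (f₂ : R)) ∈
            {f : R | (∀ h ∈ H, h • f = f) ∧ (∑ c : G ⧸ H, (Quotient.out c) • f) = 0},
          (e ⟨(f₁ : R) + (f₂ : R), hsum⟩ : G ⧸ H → R) = (e f₁ : G ⧸ H → R) + (e f₂ : G ⧸ H → R)) ∧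
      -- k[V]^G-linearity
      (∀ a : R, (∀ g : G, g • a = a) →
        ∀ f : {f : R // (∀ h ∈ H, h • f = f) ∧ (∑ c : G ⧸ H, (Quotient.out c) • f) = 0},
        ∀ hmem : a * (f : R) ∈
            {f : R | (∀ h ∈ H, h • f = f) ∧ (∑ c : G ⧸ H, (Quotient.out c) • f) = 0},
          (e ⟨a * (f : R), hmem⟩ : G ⧸ H → R) = fun c => a * (e f : G ⧸ H → R) c) := by
  refine ⟨⟨fun f => ⟨fun c => (Quotient.out c) • (f : R), ?_, ?_⟩,
           fun φ => ⟨(φ : G ⧸ H → R) (QuotientGroup.mk (1 : G) : G ⧸ H), ?_, ?_⟩, ?_, ?_⟩, ?_, ?_⟩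
  · intro g
    funext c
    exact aux_smul_out g c (f : R) f.2.1
  · exact f.2.2
  · intro h hh
    have hmk : (QuotientGroup.mk h : G ⧸ H) = QuotientGroup.mk (1 : G) :=
      QuotientGroup.eq.2 (by simpa using inv_mem hh)
    rw [aux_inv (φ : G ⧸ H → R) φ.2.1 h (QuotientGroup.mk (1 : G) : G ⧸ H), aux_smul_one, hmk]
  · have : ∀ c : G ⧸ H, (Quotient.out c) • (φ : G ⧸ H → R) (QuotientGroup.mk (1 : G) : G ⧸ H) = (φ : G ⧸ H → R) c := by
      intro c
      rw [aux_inv (φ : G ⧸ H → R) φ.2.1, aux_smul_one, QuotientGroup.out_eq']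
    rw [Finset.sum_congr rfl (fun c _ => this c)]
    exact φ.2.2
  · intro f
    apply Subtype.ext
    show (Quotient.out (QuotientGroup.mk (1 : G) : G ⧸ H)) • (f : R) = (f : R)
    refine f.2.1 _ ?_
    have := QuotientGroup.eq.1 (QuotientGroup.out_eq' (QuotientGroup.mk (1 : G) : G ⧸ H))
    simpa using this
  · intro φ
    apply Subtype.ext
    funext c
    show (Quotient.out c) • (φ : G ⧸ H → R) (QuotientGroup.mk (1 : G) : G ⧸ H) = (φ : G ⧸ H → R) c
    rw [aux_inv (φ : G ⧸ H → R) φ.2.1, aux_smul_one, QuotientGroup.out_eq']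
  · intro f₁ f₂ hsum
    funext c
    show (Quotient.out c) • ((f₁ : R) + (f₂ : R)) = _
    simp [smul_add]
  · intro a ha f hmem
    funext c
    show (Quotient.out c) • (a * (f : R)) = a * (Quotient.out c) • (f : R)
    rw [smul_mul', ha]
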